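/- Let k > 4 be an integer and let X₁ ⊆ ℝ³ be the first surface of Example 1. Then the germ at 0 of X₁ is ambient topologically equivalent to the germ at 0 of the straight cone over three disjoint circles C = {(x,y,t) : (x²+y²−4t²)·((x−t)²+(y−t/2)²−t²/16)·((x−t)²+(y+t/2)²−t²/16) = 0 and t ≥ 0}: there exist open neighborhoods U, V of 0 in ℝ³ and a homeomorphism h : U → V with h(0) = 0 and h(X₁ ∩ U) = C ∩ V. -/

import Mathlib

open Set Metric

noncomputable section

/-- The surface `X₁` of Example 1 in `ℝ³` (coordinates `x = p 0`, `y = p 1`, `t = p 2`). -/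
def ExampleX1 (k : ℕ) : Set (EuclideanSpace ℝ (Fin 3)) :=
  {p | ((p 0 ^ 2 - 2 * p 0 * p 2 + p 1 ^ 2) * (p 0 ^ 2 + 2 * p 0 * p 2 + p 1 ^ 2) - p 2 ^ k) *
        ((p 0 - p 2) ^ 2 + (p 1 - p 2 / 2) ^ 2 - p 2 ^ 2 / 16) *
        ((p 0 - p 2) ^ 2 + (p 1 + p 2 / 2) ^ 2 - p 2 ^ 2 / 16) = 0 ∧ 0 ≤ p 2}

/-- The surface `X₂` of Example 1 in `ℝ³`. -/
def ExampleX2 (k : ℕ) : Set (EuclideanSpace ℝ (Fin 3)) :=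
  {p | ((p 0 ^ 2 - 2 * p 0 * p 2 + p 1 ^ 2) * (p 0 ^ 2 + 2 * p 0 * p 2 + p 1 ^ 2) - p 2 ^ k) *
        ((p 0 - p 2) ^ 2 + p 1 ^ 2 - p 2 ^ 2 / 16) *
        ((p 0 + p 2) ^ 2 + p 1 ^ 2 - p 2 ^ 2 / 16) = 0 ∧ 0 ≤ p 2}

/-- The straight cone `C` over three disjoint circles in the plane `t = 1`, two of them
bounding non-intersecting discs inside the disc bounded by the third one. -/
def ConeC : Set (EuclideanSpace ℝ (Fin 3)) :=
  {p | (p 0 ^ 2 + p 1 ^ 2 - 4 * p 2 ^ 2) *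
        ((p 0 - p 2) ^ 2 + (p 1 - p 2 / 2) ^ 2 - p 2 ^ 2 / 16) *
        ((p 0 - p 2) ^ 2 + (p 1 + p 2 / 2) ^ 2 - p 2 ^ 2 / 16) = 0 ∧ 0 ≤ p 2}

/-- The germs at `0` of `X` and `Y` are ambient topologically equivalent: there exist open
neighborhoods `U, V` of `0` and a homeomorphism `h : U → V` (with continuous inverse `g`)
such that `h 0 = 0` and `h (X ∩ U) = Y ∩ V`. -/
def AmbientTopEquiv {n : ℕ} (X Y : Set (EuclideanSpace ℝ (Fin n))) : Prop :=
  ∃ U V : Set (EuclideanSpace ℝ (Fin n)), IsOpen U ∧ IsOpen V ∧ 0 ∈ U ∧ 0 ∈ V ∧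
    ∃ h g : EuclideanSpace ℝ (Fin n) → EuclideanSpace ℝ (Fin n),
      ContinuousOn h U ∧ ContinuousOn g V ∧
      Set.MapsTo h U V ∧ Set.MapsTo g V U ∧
      (∀ x ∈ U, g (h x) = x) ∧ (∀ y ∈ V, h (g y) = y) ∧
      h 0 = 0 ∧ h '' (X ∩ U) = Y ∩ V

namespace X1C

abbrev E3 := EuclideanSpace ℝ (Fin 3)

def clamp (u : ℝ) : ℝ := max 0 (min 1 u)

lemma clamp_nonneg (u : ℝ) : 0 ≤ clamp u := le_max_left _ _
lemma clamp_le_one (u : ℝ) : clamp u ≤ 1 := max_le zero_le_one (min_le_left _ _)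
lemma clamp_of_nonpos {u : ℝ} (h : u ≤ 0) : clamp u = 0 :=
  max_eq_left ((min_le_right _ _).trans h)
lemma clamp_of_one_le {u : ℝ} (h : 1 ≤ u) : clamp u = 1 := by
  rw [clamp, min_eq_left h]; exact max_eq_right zero_le_one
lemma clamp_of_mem {u : ℝ} (h0 : 0 ≤ u) (h1 : u ≤ 1) : clamp u = u := by
  rw [clamp, min_eq_right h1]; exact max_eq_right h0
lemma continuous_clamp : Continuous clamp :=
  continuous_const.max (continuous_const.min continuous_id)

/-- the 1-D radial profile map: identity on `[0,a]`, sends `b ↦ c`, translation beyond `b`. -/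
def phi (a b c r : ℝ) : ℝ := r + (c - b) * clamp ((r - a) / (b - a))

lemma phi_of_le {a b c r : ℝ} (hab : a < b) (h : r ≤ a) : phi a b c r = r := by
  rw [phi, clamp_of_nonpos (div_nonpos_of_nonpos_of_nonneg (by linarith) (by linarith))]
  ring

lemma phi_of_ge {a b c r : ℝ} (hab : a < b) (h : b ≤ r) : phi a b c r = r + c - b := by
  rw [phi, clamp_of_one_le (by rw [le_div_iff₀ (by linarith)]; linarith)]
  ring

lemma phi_of_mem {a b c r : ℝ} (hab : a < b) (h1 : a ≤ r) (h2 : r ≤ b) :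
    phi a b c r = r + (c - b) * ((r - a) / (b - a)) := by
  rw [phi, clamp_of_mem (div_nonneg (by linarith) (by linarith))
    ((div_le_one (by linarith)).2 (by linarith))]

lemma phi_self (a b c : ℝ) (hab : a < b) : phi a b c b = c := by
  rw [phi_of_ge hab le_rfl]; ring

lemma phi_pos {a b c r : ℝ} (ha : 0 < a) (hab : a < b) (hac : a < c) (hr : 0 < r) :
    0 < phi a b c r := by
  rcases le_or_gt r a with h | h
  · rwa [phi_of_le hab h]
  rcases le_or_gt r b with h2 | h2
  · rw [phi_of_mem hab h.le h2]
    have hba : 0 < b - a := by linarith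
    have key : r + (c - b) * ((r - a) / (b - a)) - a = (r - a) * ((c - a) / (b - a)) := by
      field_simp; ring
    have hp : 0 < (r - a) * ((c - a) / (b - a)) :=
      mul_pos (by linarith) (div_pos (by linarith) hba)
    linarith
  · rw [phi_of_ge hab h2.le]; linarith

lemma phi_comp {a b c : ℝ} (hab : a < b) (hac : a < c) (r : ℝ) :
    phi a c b (phi a b c r) = r := by
  rcases le_or_gt r a with h | h
  · rw [phi_of_le hab h, phi_of_le hac h]
  rcases le_or_gt r b with h2 | h2
  · rw [phi_of_mem hab h.le h2]
    have hba : 0 < b - a := by linarith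
    have hca : 0 < c - a := by linarith
    have hmem1 : a ≤ r + (c - b) * ((r - a) / (b - a)) := by
      have : r + (c - b) * ((r - a) / (b - a)) - a = (r - a) * ((c - a) / (b - a)) := by
        field_simp; ring
      nlinarith [mul_nonneg (by linarith : (0:ℝ) ≤ r - a) (div_pos hca hba).le]
    have hmem2 : r + (c - b) * ((r - a) / (b - a)) ≤ c := by
      have : c - (r + (c - b) * ((r - a) / (b - a))) = (b - r) * ((c - a) / (b - a)) := by
        field_simp; ring
      nlinarith [mul_nonneg (by linarith : (0:ℝ) ≤ b - r) (div_pos hca hba).le]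
    rw [phi_of_mem hac hmem1 hmem2]
    field_simp
    ring
  · rw [phi_of_ge hab h2.le, phi_of_ge hac (by linarith)]
    ring

/-- truncated time coordinate -/
def Tp (p : E3) : ℝ := max (p 2) 0
/-- squared distance to the `t`-axis -/
def r2 (p : E3) : ℝ := p 0 ^ 2 + p 1 ^ 2
/-- distance to the `t`-axis -/
def rr (p : E3) : ℝ := Real.sqrt (r2 p)
/-- squared cosine of the angular coordinate -/
def wp (p : E3) : ℝ := p 0 ^ 2 / r2 p
/-- auxiliary square root -/
def Sp (k : ℕ) (p : E3) : ℝ := Real.sqrt (4 * Tp p ^ 4 * wp p ^ 2 + Tp p ^ k)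
/-- the radius of the "peanut" curve in the direction of `p` at height `Tp p` -/
def rho (k : ℕ) (p : E3) : ℝ := Real.sqrt (2 * Tp p ^ 2 * wp p + Sp k p)
/-- the radius below which our homeomorphism is the identity -/
def aa (k : ℕ) (p : E3) : ℝ := min (29 / 20 * Tp p) (9 / 10 * rho k p)

lemma Tp_nonneg (p : E3) : 0 ≤ Tp p := le_max_right _ _
lemma r2_nonneg (p : E3) : 0 ≤ r2 p := by unfold r2; positivity
lemma rr_nonneg (p : E3) : 0 ≤ rr p := Real.sqrt_nonneg _
lemma rr_sq (p : E3) : rr p ^ 2 = r2 p := Real.sq_sqrt (r2_nonneg p)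
lemma wp_nonneg (p : E3) : 0 ≤ wp p := by
  unfold wp r2; positivity
lemma wp_le_one (p : E3) : wp p ≤ 1 := by
  unfold wp r2
  rcases eq_or_lt_of_le (r2_nonneg p) with h | h
  · unfold r2 at h; rw [← h]; simp
  · exact (div_le_one (by unfold r2 at h; linarith)).2 (by nlinarith [sq_nonneg (p 1)])
lemma Sp_nonneg (k : ℕ) (p : E3) : 0 ≤ Sp k p := Real.sqrt_nonneg _
lemma rho_nonneg (k : ℕ) (p : E3) : 0 ≤ rho k p := Real.sqrt_nonneg _

lemma Sp_arg_nonneg (k : ℕ) (p : E3) : 0 ≤ 4 * Tp p ^ 4 * wp p ^ 2 + Tp p ^ k := by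
  have := Tp_nonneg p; positivity

lemma Sp_sq (k : ℕ) (p : E3) : Sp k p ^ 2 = 4 * Tp p ^ 4 * wp p ^ 2 + Tp p ^ k :=
  Real.sq_sqrt (Sp_arg_nonneg k p)

lemma Sp_ge (k : ℕ) (p : E3) : 2 * Tp p ^ 2 * wp p ≤ Sp k p := by
  have h0 : 0 ≤ 2 * Tp p ^ 2 * wp p := by
    have := Tp_nonneg p; have := wp_nonneg p; positivity
  have : (2 * Tp p ^ 2 * wp p) ^ 2 ≤ 4 * Tp p ^ 4 * wp p ^ 2 + Tp p ^ k := by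
    have := pow_nonneg (Tp_nonneg p) k; nlinarith
  calc 2 * Tp p ^ 2 * wp p = Real.sqrt ((2 * Tp p ^ 2 * wp p) ^ 2) := (Real.sqrt_sq h0).symm
    _ ≤ Sp k p := Real.sqrt_le_sqrt this

lemma rho_sq (k : ℕ) (p : E3) : rho k p ^ 2 = 2 * Tp p ^ 2 * wp p + Sp k p := by
  apply Real.sq_sqrt
  have h1 := Sp_ge k p
  have h0 : 0 ≤ 2 * Tp p ^ 2 * wp p := by
    have := Tp_nonneg p; have := wp_nonneg p; positivity
  linarith

/-- lower bound for `rho` independent of the angle -/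
lemma rho_ge (k : ℕ) (p : E3) : Real.sqrt (Real.sqrt (Tp p ^ k)) ≤ rho k p := by
  apply Real.sqrt_le_sqrt
  have h1 : Real.sqrt (Tp p ^ k) ≤ Sp k p := by
    apply Real.sqrt_le_sqrt
    nlinarith [sq_nonneg (Tp p ^ 2 * wp p)]
  have h0 : 0 ≤ 2 * Tp p ^ 2 * wp p := by
    have := Tp_nonneg p; have := wp_nonneg p; positivity
  linarith

lemma rho_pos {k : ℕ} (hk : 1 ≤ k) {p : E3} (hT : 0 < Tp p) : 0 < rho k p := by
  have h1 : 0 < Tp p ^ k := pow_pos hT k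
  have h2 : 0 < Real.sqrt (Real.sqrt (Tp p ^ k)) :=
    Real.sqrt_pos.2 (Real.sqrt_pos.2 h1)
  linarith [rho_ge k p]

/-- upper bound for `rho` -/
lemma rho_le (k : ℕ) (p : E3) :
    rho k p ≤ 2 * Tp p + Real.sqrt (Real.sqrt (Tp p ^ k)) := by
  set T := Tp p with hT
  set q := Real.sqrt (Real.sqrt (T ^ k)) with hq
  have hT0 : 0 ≤ T := Tp_nonneg p
  have hq0 : 0 ≤ q := Real.sqrt_nonneg _
  have hq2 : q ^ 2 = Real.sqrt (T ^ k) := Real.sq_sqrt (Real.sqrt_nonneg _)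
  have hq4 : (q ^ 2) ^ 2 = T ^ k := by rw [hq2]; exact Real.sq_sqrt (pow_nonneg hT0 k)
  have hS : Sp k p ≤ 2 * T ^ 2 + q ^ 2 := by
    have harg : 4 * T ^ 4 * wp p ^ 2 + T ^ k ≤ (2 * T ^ 2 + q ^ 2) ^ 2 := by
      have hw1 : wp p ^ 2 ≤ 1 := by
        have := wp_nonneg p; have := wp_le_one p; nlinarith
      have h4 : 0 ≤ (1 - wp p ^ 2) * (4 * T ^ 4) := by
        have : (0:ℝ) ≤ T ^ 4 := by positivity
        nlinarith
      nlinarith [hq4, mul_nonneg (sq_nonneg T) (sq_nonneg q), sq_nonneg (q ^ 2)]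
    calc Sp k p ≤ Real.sqrt ((2 * T ^ 2 + q ^ 2) ^ 2) := Real.sqrt_le_sqrt harg
      _ = 2 * T ^ 2 + q ^ 2 := Real.sqrt_sq (by positivity)
  have harg2 : 2 * T ^ 2 * wp p + Sp k p ≤ (2 * T + q) ^ 2 := by
    have hw : wp p ≤ 1 := wp_le_one p
    have hw0 : 0 ≤ wp p := wp_nonneg p
    nlinarith [mul_nonneg hT0 hq0, sq_nonneg T]
  calc rho k p ≤ Real.sqrt ((2 * T + q) ^ 2) := Real.sqrt_le_sqrt harg2
    _ = 2 * T + q := Real.sqrt_sq (by positivity)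

lemma aa_pos {k : ℕ} (hk : 1 ≤ k) {p : E3} (hT : 0 < Tp p) : 0 < aa k p :=
  lt_min (by linarith) (by linarith [rho_pos hk hT])

lemma aa_lt_rho {k : ℕ} (hk : 1 ≤ k) {p : E3} (hT : 0 < Tp p) : aa k p < rho k p :=
  (min_le_right _ _).trans_lt (by linarith [rho_pos hk hT])

lemma aa_lt_2T {k : ℕ} (hk : 1 ≤ k) {p : E3} (hT : 0 < Tp p) : aa k p < 2 * Tp p :=
  (min_le_left _ _).trans_lt (by linarith)

lemma Tp_eq_zero {p : E3} (h : p 2 ≤ 0) : Tp p = 0 := max_eq_right h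
lemma Tp_eq {p : E3} (h : 0 ≤ p 2) : Tp p = p 2 := max_eq_left h

lemma rho_of_T0 {k : ℕ} (hk : 1 ≤ k) {p : E3} (h : Tp p = 0) : rho k p = 0 := by
  unfold rho Sp
  rw [h]
  simp [zero_pow (by omega : k ≠ 0)]

/-- the coefficient of the radial displacement for the forward map -/
def cH (k : ℕ) (p : E3) : ℝ :=
  (2 * Tp p - rho k p) * clamp ((rr p - aa k p) / (rho k p - aa k p))
/-- the coefficient of the radial displacement for the inverse map -/
def cG (k : ℕ) (p : E3) : ℝ :=
  (rho k p - 2 * Tp p) * clamp ((rr p - aa k p) / (2 * Tp p - aa k p))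

/-- the forward fiberwise radial homeomorphism -/
def hmap (k : ℕ) (p : E3) : E3 := WithLp.toLp 2 (fun i => if i = 2 then p 2 else p i + cH k p * (p i / rr p))
/-- the inverse fiberwise radial homeomorphism -/
def gmap (k : ℕ) (p : E3) : E3 := WithLp.toLp 2 (fun i => if i = 2 then p 2 else p i + cG k p * (p i / rr p))

lemma hmap_apply2 (k : ℕ) (p : E3) : hmap k p 2 = p 2 := by simp [hmap]
lemma gmap_apply2 (k : ℕ) (p : E3) : gmap k p 2 = p 2 := by simp [gmap]
lemma hmap_apply (k : ℕ) (p : E3) {i : Fin 3} (hi : i ≠ 2) :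
    hmap k p i = p i + cH k p * (p i / rr p) := by simp [hmap, hi]
lemma gmap_apply (k : ℕ) (p : E3) {i : Fin 3} (hi : i ≠ 2) :
    gmap k p i = p i + cG k p * (p i / rr p) := by simp [gmap, hi]

lemma hmap_of_cH0 {k : ℕ} {p : E3} (h : cH k p = 0) : hmap k p = p := by
  ext i
  by_cases hi : i = 2
  · subst hi; exact hmap_apply2 k p
  · rw [hmap_apply k p hi, h]; ring
lemma gmap_of_cG0 {k : ℕ} {p : E3} (h : cG k p = 0) : gmap k p = p := by
  ext i
  by_cases hi : i = 2
  · subst hi; exact gmap_apply2 k p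
  · rw [gmap_apply k p hi, h]; ring

lemma cH_of_T0 {k : ℕ} (hk : 1 ≤ k) {p : E3} (h : Tp p = 0) : cH k p = 0 := by
  unfold cH; rw [h, rho_of_T0 hk h]; ring
lemma cG_of_T0 {k : ℕ} (hk : 1 ≤ k) {p : E3} (h : Tp p = 0) : cG k p = 0 := by
  unfold cG; rw [h, rho_of_T0 hk h]; ring

lemma cH_of_le {k : ℕ} (hk : 1 ≤ k) {p : E3} (hT : 0 < Tp p) (h : rr p ≤ aa k p) :
    cH k p = 0 := by
  unfold cH
  rw [clamp_of_nonpos (div_nonpos_of_nonpos_of_nonneg (by linarith)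
    (by linarith [aa_lt_rho hk hT]))]
  ring
lemma cG_of_le {k : ℕ} (hk : 1 ≤ k) {p : E3} (hT : 0 < Tp p) (h : rr p ≤ aa k p) :
    cG k p = 0 := by
  unfold cG
  rw [clamp_of_nonpos (div_nonpos_of_nonpos_of_nonneg (by linarith)
    (by linarith [aa_lt_2T hk hT]))]
  ring

lemma rr_eq_zero {p : E3} (h : rr p = 0) : p 0 = 0 ∧ p 1 = 0 := by
  have h2 : r2 p = 0 := by
    have := rr_sq p; rw [h] at this; simpa using this.symm
  unfold r2 at h2
  constructor <;> nlinarith [sq_nonneg (p 0), sq_nonneg (p 1)]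

/-- `rr p + cH k p` equals the profile function `phi` -/
lemma rr_add_cH (k : ℕ) (p : E3) :
    rr p + cH k p = phi (aa k p) (rho k p) (2 * Tp p) (rr p) := by
  unfold cH phi; ring
lemma rr_add_cG (k : ℕ) (p : E3) :
    rr p + cG k p = phi (aa k p) (2 * Tp p) (rho k p) (rr p) := by
  unfold cG phi; ring

/-- invariance data for the forward map at a point with `Tp > 0`, `rr > 0` -/
lemma hmap_scale {k : ℕ} (hk : 1 ≤ k) {p : E3} (hT : 0 < Tp p) (hr : 0 < rr p) {i : Fin 3}
    (hi : i ≠ 2) : hmap k p i = p i * ((rr p + cH k p) / rr p) := by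
  rw [hmap_apply k p hi]
  field_simp
lemma gmap_scale {k : ℕ} (hk : 1 ≤ k) {p : E3} (hT : 0 < Tp p) (hr : 0 < rr p) {i : Fin 3}
    (hi : i ≠ 2) : gmap k p i = p i * ((rr p + cG k p) / rr p) := by
  rw [gmap_apply k p hi]
  field_simp

/-- positive scalings of the first two coordinates preserve all the geometric data -/
lemma invariance {k : ℕ} {p q : E3} (σ : ℝ) (hσ : 0 < σ)
    (h0 : q 0 = p 0 * σ) (h1 : q 1 = p 1 * σ) (h2 : q 2 = p 2) :
    Tp q = Tp p ∧ wp q = wp p ∧ rho k q = rho k p ∧ aa k q = aa k p ∧ rr q = rr p * σ := by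
  have hT : Tp q = Tp p := by unfold Tp; rw [h2]
  have hr2 : r2 q = r2 p * σ ^ 2 := by unfold r2; rw [h0, h1]; ring
  have hw : wp q = wp p := by
    unfold wp
    rw [hr2, h0]
    rcases eq_or_lt_of_le (r2_nonneg p) with h | h
    · rw [← h]; simp
    · rw [mul_pow, mul_div_mul_right _ _ (by positivity : σ ^ 2 ≠ 0)]
  have hrho : rho k q = rho k p := by unfold rho Sp; rw [hT, hw]
  have haa : aa k q = aa k p := by unfold aa; rw [hT, hrho]
  refine ⟨hT, hw, hrho, haa, ?_⟩
  unfold rr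
  rw [hr2, Real.sqrt_mul (r2_nonneg p), Real.sqrt_sq hσ.le]

/-- `g ∘ h = id` -/
lemma gmap_hmap {k : ℕ} (hk : 1 ≤ k) (p : E3) : gmap k (hmap k p) = p := by
  by_cases hT : 0 < Tp p
  · by_cases hr : 0 < rr p
    · -- main case
      set a := aa k p with ha
      set b := rho k p with hb
      set c := 2 * Tp p with hc
      have h0a : 0 < a := aa_pos hk hT
      have hab : a < b := aa_lt_rho hk hT
      have hac : a < c := aa_lt_2T hk hT
      set φ := phi a b c (rr p) with hφ
      have hφpos : 0 < φ := phi_pos h0a hab hac hr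
      set σ := φ / rr p with hσdef
      have hσ : 0 < σ := div_pos hφpos hr
      have hq0 : hmap k p 0 = p 0 * σ := by
        rw [hmap_scale hk hT hr (by decide), rr_add_cH, hσdef]
      have hq1 : hmap k p 1 = p 1 * σ := by
        rw [hmap_scale hk hT hr (by decide), rr_add_cH, hσdef]
      have hq2 : hmap k p 2 = p 2 := hmap_apply2 k p
      obtain ⟨hT', hw', hrho', haa', hrr'⟩ := invariance (k := k) σ hσ hq0 hq1 hq2
      have hrrq : rr (hmap k p) = φ := by
        rw [hrr', hσdef]; field_simp
      ext i
      by_cases hi : i = 2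
      · subst hi; rw [gmap_apply2, hmap_apply2]
      · have hTq : 0 < Tp (hmap k p) := by rw [hT']; exact hT
        have hrq : 0 < rr (hmap k p) := by rw [hrrq]; exact hφpos
        rw [gmap_scale hk hTq hrq hi, rr_add_cG, hrrq, haa', hrho', hT', ← hb, ← ha, ← hc]
        have hcomp : phi a c b φ = rr p := phi_comp hab hac (rr p)
        rw [hφ] at hcomp ⊢
        rw [hcomp]
        by_cases hI : i = 0
        · subst hI; rw [hq0, hσdef]; field_simp
          rw [← hφ, mul_div_assoc, div_self hφpos.ne', mul_one]
        · have : i = 1 := by omega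
          subst this; rw [hq1, hσdef]; field_simp
          rw [← hφ, mul_div_assoc, div_self hφpos.ne', mul_one]
    · -- on the axis: both maps are the identity
      have hr0 : rr p = 0 := le_antisymm (not_lt.1 hr) (rr_nonneg p)
      have h1 : hmap k p = p :=
        hmap_of_cH0 (cH_of_le hk hT (by rw [hr0]; exact (aa_pos hk hT).le))
      rw [h1]
      exact gmap_of_cG0 (cG_of_le hk hT (by rw [hr0]; exact (aa_pos hk hT).le))
  · -- t ≤ 0 : both maps are the identity
    have hT0 : Tp p = 0 := le_antisymm (not_lt.1 hT) (Tp_nonneg p)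
    have h1 : hmap k p = p := hmap_of_cH0 (cH_of_T0 hk hT0)
    rw [h1]
    exact gmap_of_cG0 (cG_of_T0 hk hT0)

/-- `h ∘ g = id` -/
lemma hmap_gmap {k : ℕ} (hk : 1 ≤ k) (p : E3) : hmap k (gmap k p) = p := by
  by_cases hT : 0 < Tp p
  · by_cases hr : 0 < rr p
    · set a := aa k p with ha
      set b := 2 * Tp p with hb
      set c := rho k p with hc
      have h0a : 0 < a := aa_pos hk hT
      have hab : a < b := aa_lt_2T hk hT
      have hac : a < c := aa_lt_rho hk hT
      set φ := phi a b c (rr p) with hφ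
      have hφpos : 0 < φ := phi_pos h0a hab hac hr
      set σ := φ / rr p with hσdef
      have hσ : 0 < σ := div_pos hφpos hr
      have hq0 : gmap k p 0 = p 0 * σ := by
        rw [gmap_scale hk hT hr (by decide), rr_add_cG, hσdef]
      have hq1 : gmap k p 1 = p 1 * σ := by
        rw [gmap_scale hk hT hr (by decide), rr_add_cG, hσdef]
      have hq2 : gmap k p 2 = p 2 := gmap_apply2 k p
      obtain ⟨hT', hw', hrho', haa', hrr'⟩ := invariance (k := k) σ hσ hq0 hq1 hq2
      have hrrq : rr (gmap k p) = φ := by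
        rw [hrr', hσdef]; field_simp
      ext i
      by_cases hi : i = 2
      · subst hi; rw [hmap_apply2, gmap_apply2]
      · have hTq : 0 < Tp (gmap k p) := by rw [hT']; exact hT
        have hrq : 0 < rr (gmap k p) := by rw [hrrq]; exact hφpos
        rw [hmap_scale hk hTq hrq hi, rr_add_cH, hrrq, haa', hrho', hT', ← hb, ← ha, ← hc]
        have hcomp : phi a c b φ = rr p := phi_comp hab hac (rr p)
        rw [hφ] at hcomp ⊢
        rw [hcomp]
        by_cases hI : i = 0
        · subst hI; rw [hq0, hσdef]; field_simp
          rw [← hφ, mul_div_assoc, div_self hφpos.ne', mul_one]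
        · have : i = 1 := by omega
          subst this; rw [hq1, hσdef]; field_simp
          rw [← hφ, mul_div_assoc, div_self hφpos.ne', mul_one]
    · have hr0 : rr p = 0 := le_antisymm (not_lt.1 hr) (rr_nonneg p)
      have h1 : gmap k p = p :=
        gmap_of_cG0 (cG_of_le hk hT (by rw [hr0]; exact (aa_pos hk hT).le))
      rw [h1]
      exact hmap_of_cH0 (cH_of_le hk hT (by rw [hr0]; exact (aa_pos hk hT).le))
  · have hT0 : Tp p = 0 := le_antisymm (not_lt.1 hT) (Tp_nonneg p)
    have h1 : gmap k p = p := gmap_of_cG0 (cG_of_T0 hk hT0)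
    rw [h1]
    exact hmap_of_cH0 (cH_of_T0 hk hT0)

/-- the bound for the displacement -/
def Bb (k : ℕ) (p : E3) : ℝ := 4 * Tp p + Real.sqrt (Real.sqrt (Tp p ^ k))

lemma Bb_nonneg (k : ℕ) (p : E3) : 0 ≤ Bb k p := by
  have := Tp_nonneg p; have := Real.sqrt_nonneg (Real.sqrt (Tp p ^ k)); unfold Bb; linarith

lemma cH_abs_le (k : ℕ) (p : E3) : |cH k p| ≤ Bb k p := by
  unfold cH
  have h1 : |2 * Tp p - rho k p| ≤ 2 * Tp p + rho k p :=
    abs_le.2 ⟨by linarith [Tp_nonneg p, rho_nonneg k p], by linarith [rho_nonneg k p]⟩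
  have h2 : |clamp ((rr p - aa k p) / (rho k p - aa k p))| ≤ 1 := by
    rw [abs_of_nonneg (clamp_nonneg _)]; exact clamp_le_one _
  calc |(2 * Tp p - rho k p) * clamp ((rr p - aa k p) / (rho k p - aa k p))|
      = |2 * Tp p - rho k p| * |clamp ((rr p - aa k p) / (rho k p - aa k p))| := abs_mul _ _
    _ ≤ (2 * Tp p + rho k p) * 1 := by
        apply mul_le_mul h1 h2 (abs_nonneg _) (by linarith [Tp_nonneg p, rho_nonneg k p])
    _ ≤ Bb k p := by unfold Bb; linarith [rho_le k p]

lemma cG_abs_le (k : ℕ) (p : E3) : |cG k p| ≤ Bb k p := by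
  unfold cG
  have h1 : |rho k p - 2 * Tp p| ≤ 2 * Tp p + rho k p :=
    abs_le.2 ⟨by linarith [Tp_nonneg p, rho_nonneg k p], by linarith [Tp_nonneg p]⟩
  have h2 : |clamp ((rr p - aa k p) / (2 * Tp p - aa k p))| ≤ 1 := by
    rw [abs_of_nonneg (clamp_nonneg _)]; exact clamp_le_one _
  calc |(rho k p - 2 * Tp p) * clamp ((rr p - aa k p) / (2 * Tp p - aa k p))|
      = |rho k p - 2 * Tp p| * |clamp ((rr p - aa k p) / (2 * Tp p - aa k p))| := abs_mul _ _
    _ ≤ (2 * Tp p + rho k p) * 1 := by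
        apply mul_le_mul h1 h2 (abs_nonneg _) (by linarith [Tp_nonneg p, rho_nonneg k p])
    _ ≤ Bb k p := by unfold Bb; linarith [rho_le k p]

/-- norm of the displacement, generic version -/
lemma norm_displacement (c : ℝ) (p : E3) (F : E3)
    (hF : ∀ i : Fin 3, F i = if i = 2 then 0 else c * (p i / rr p)) : ‖F‖ ≤ |c| := by
  have hnorm : ‖F‖ = Real.sqrt (F 0 ^ 2 + F 1 ^ 2 + F 2 ^ 2) := by
    rw [EuclideanSpace.norm_eq]
    simp [Fin.sum_univ_three, Real.norm_eq_abs, sq_abs]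
  rw [hnorm, hF 0, hF 1, hF 2]
  simp only [if_true, if_neg (by decide : (0 : Fin 3) ≠ 2), if_neg (by decide : (1 : Fin 3) ≠ 2)]
  norm_num
  rcases eq_or_lt_of_le (rr_nonneg p) with h | h
  · obtain ⟨h0, h1⟩ := rr_eq_zero h.symm
    rw [h0, h1]
    simp
  · have hrr2 : rr p ^ 2 = p 0 ^ 2 + p 1 ^ 2 := rr_sq p
    have : (c * (p 0 / rr p)) ^ 2 + (c * (p 1 / rr p)) ^ 2 = c ^ 2 := by
      field_simp
      rw [hrr2]
    rw [this, Real.sqrt_sq_eq_abs]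

lemma sub_apply (u v : E3) (i : Fin 3) : (u - v) i = u i - v i := rfl

lemma hmap_sub_le (k : ℕ) (p : E3) : ‖hmap k p - p‖ ≤ Bb k p := by
  refine le_trans (norm_displacement (cH k p) p _ ?_) (cH_abs_le k p)
  intro i
  rw [sub_apply]
  by_cases hi : i = 2
  · subst hi; rw [hmap_apply2]; simp
  · rw [hmap_apply k p hi, if_neg hi]; ring

lemma gmap_sub_le (k : ℕ) (p : E3) : ‖gmap k p - p‖ ≤ Bb k p := by
  refine le_trans (norm_displacement (cG k p) p _ ?_) (cG_abs_le k p)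
  intro i
  rw [sub_apply]
  by_cases hi : i = 2
  · subst hi; rw [gmap_apply2]; simp
  · rw [gmap_apply k p hi, if_neg hi]; ring

lemma continuous_Tp : Continuous Tp :=
  ((EuclideanSpace.proj (2 : Fin 3)).continuous).max continuous_const

lemma continuous_r2 : Continuous r2 :=
  (((EuclideanSpace.proj (0 : Fin 3)).continuous).pow 2).add
    (((EuclideanSpace.proj (1 : Fin 3)).continuous).pow 2)

lemma continuous_rr : Continuous rr := Real.continuous_sqrt.comp continuous_r2

lemma continuous_Bb (k : ℕ) : Continuous (Bb k) := by
  unfold Bb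
  exact (continuous_const.mul continuous_Tp).add
    (Real.continuous_sqrt.comp (Real.continuous_sqrt.comp (continuous_Tp.pow k)))

lemma Bb_zero {k : ℕ} (hk : 1 ≤ k) {p : E3} (h : Tp p = 0) : Bb k p = 0 := by
  unfold Bb
  rw [h, zero_pow (by omega : k ≠ 0), Real.sqrt_zero, Real.sqrt_zero]
  ring

/-- continuity at interior points, shared computations -/
lemma continuousAt_data {k : ℕ} (hk : 1 ≤ k) {p₀ : E3} (hT : 0 < p₀ 2) (hr : 0 < r2 p₀) :
    ContinuousAt (wp) p₀ ∧ ContinuousAt (rho k) p₀ ∧ ContinuousAt (aa k) p₀ := by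
  have cw : ContinuousAt wp p₀ := by
    unfold wp
    exact (((EuclideanSpace.proj (0 : Fin 3)).continuous.continuousAt).pow 2).div
      continuous_r2.continuousAt (ne_of_gt hr)
  have cS : ContinuousAt (Sp k) p₀ := by
    unfold Sp
    exact (Real.continuous_sqrt.continuousAt).comp
      (((continuous_const.continuousAt.mul ((continuous_Tp.continuousAt).pow 4)).mul
        (cw.pow 2)).add ((continuous_Tp.continuousAt).pow k))
  have crho : ContinuousAt (rho k) p₀ := by
    unfold rho
    exact (Real.continuous_sqrt.continuousAt).comp
      (((continuous_const.continuousAt.mul ((continuous_Tp.continuousAt).pow 2)).mul cw).add cS)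
  have caa : ContinuousAt (aa k) p₀ := by
    unfold aa
    exact (continuous_const.continuousAt.mul continuous_Tp.continuousAt).min
      (continuous_const.continuousAt.mul crho)
  exact ⟨cw, crho, caa⟩

lemma continuousAt_interior_h {k : ℕ} (hk : 1 ≤ k) {p₀ : E3} (hT : 0 < p₀ 2)
    (hr : 0 < r2 p₀) : ContinuousAt (hmap k) p₀ := by
  obtain ⟨cw, crho, caa⟩ := continuousAt_data hk hT hr
  have hTp : Tp p₀ = p₀ 2 := Tp_eq hT.le
  have hTpos : 0 < Tp p₀ := by rw [hTp]; exact hT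
  have hrrpos : 0 < rr p₀ := Real.sqrt_pos.2 hr
  have hden : rho k p₀ - aa k p₀ ≠ 0 := ne_of_gt (by linarith [aa_lt_rho hk hTpos])
  have cc : ContinuousAt (cH k) p₀ := by
    unfold cH
    exact ((continuous_const.continuousAt.mul continuous_Tp.continuousAt).sub crho).mul
      ((continuous_clamp.continuousAt).comp
        (((continuous_rr.continuousAt).sub caa).div (crho.sub caa) hden))
  have he : ContinuousAt (fun p : E3 =>
      ((fun i => if i = 2 then p 2 else p i + cH k p * (p i / rr p)) : Fin 3 → ℝ)) p₀ := by
    apply continuousAt_pi.2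
    intro i
    by_cases hi : i = 2
    · simp only [hi, if_true]
      exact (EuclideanSpace.proj (2 : Fin 3)).continuous.continuousAt
    · simp only [if_neg hi]
      exact ((EuclideanSpace.proj i).continuous.continuousAt).add
        (cc.mul (((EuclideanSpace.proj i).continuous.continuousAt).div
          continuous_rr.continuousAt (ne_of_gt hrrpos)))
  exact (PiLp.continuous_toLp (p := 2) (β := fun _ : Fin 3 => ℝ)).continuousAt.comp he

lemma continuousAt_interior_g {k : ℕ} (hk : 1 ≤ k) {p₀ : E3} (hT : 0 < p₀ 2)
    (hr : 0 < r2 p₀) : ContinuousAt (gmap k) p₀ := by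
  obtain ⟨cw, crho, caa⟩ := continuousAt_data hk hT hr
  have hTp : Tp p₀ = p₀ 2 := Tp_eq hT.le
  have hTpos : 0 < Tp p₀ := by rw [hTp]; exact hT
  have hrrpos : 0 < rr p₀ := Real.sqrt_pos.2 hr
  have hden : 2 * Tp p₀ - aa k p₀ ≠ 0 := ne_of_gt (by linarith [aa_lt_2T hk hTpos])
  have cc : ContinuousAt (cG k) p₀ := by
    unfold cG
    exact (crho.sub (continuous_const.continuousAt.mul continuous_Tp.continuousAt)).mul
      ((continuous_clamp.continuousAt).comp
        (((continuous_rr.continuousAt).sub caa).div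
          ((continuous_const.continuousAt.mul continuous_Tp.continuousAt).sub caa) hden))
  have he : ContinuousAt (fun p : E3 =>
      ((fun i => if i = 2 then p 2 else p i + cG k p * (p i / rr p)) : Fin 3 → ℝ)) p₀ := by
    apply continuousAt_pi.2
    intro i
    by_cases hi : i = 2
    · simp only [hi, if_true]
      exact (EuclideanSpace.proj (2 : Fin 3)).continuous.continuousAt
    · simp only [if_neg hi]
      exact ((EuclideanSpace.proj i).continuous.continuousAt).add
        (cc.mul (((EuclideanSpace.proj i).continuous.continuousAt).div
          continuous_rr.continuousAt (ne_of_gt hrrpos)))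
  exact (PiLp.continuous_toLp (p := 2) (β := fun _ : Fin 3 => ℝ)).continuousAt.comp he

/-- on the open set `N t₀`, points are in the identity region -/
lemma axis_nbhd {k : ℕ} (hk : 1 ≤ k) {t₀ : ℝ} (ht : 0 < t₀) {p : E3}
    (h1 : t₀ / 2 < p 2)
    (h2 : r2 p < (min (29 / 20 * (t₀ / 2)) (9 / 10 * Real.sqrt (Real.sqrt ((t₀ / 2) ^ k)))) ^ 2) :
    rr p ≤ aa k p ∧ 0 < Tp p := by
  set m := min (29 / 20 * (t₀ / 2)) (9 / 10 * Real.sqrt (Real.sqrt ((t₀ / 2) ^ k))) with hm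
  have hmpos : 0 < m := by
    apply lt_min (by linarith)
    have : 0 < Real.sqrt (Real.sqrt ((t₀ / 2) ^ k)) :=
      Real.sqrt_pos.2 (Real.sqrt_pos.2 (pow_pos (by linarith) k))
    linarith
  have hTp : Tp p = p 2 := Tp_eq (by linarith)
  have hTpos : 0 < Tp p := by rw [hTp]; linarith
  refine ⟨?_, hTpos⟩
  have hrrm : rr p ≤ m := by
    have : rr p ≤ Real.sqrt (m ^ 2) := Real.sqrt_le_sqrt h2.le
    rwa [Real.sqrt_sq hmpos.le] at this
  refine hrrm.trans (le_min ?_ ?_)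
  · refine (min_le_left _ _).trans ?_
    rw [hTp]; linarith
  · refine (min_le_right _ _).trans ?_
    have hmono : Real.sqrt (Real.sqrt ((t₀ / 2) ^ k)) ≤ Real.sqrt (Real.sqrt (Tp p ^ k)) := by
      apply Real.sqrt_le_sqrt
      apply Real.sqrt_le_sqrt
      apply pow_le_pow_left₀ (by linarith) (by rw [hTp]; linarith)
    linarith [rho_ge k p]

lemma continuous_hmap {k : ℕ} (hk : 1 ≤ k) : Continuous (hmap k) := by
  rw [continuous_iff_continuousAt]
  intro p₀
  rcases lt_trichotomy (p₀ 2) 0 with hneg | hzero | hpos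
  · -- negative time: locally the identity
    have hopen : IsOpen {p : E3 | p 2 < 0} :=
      isOpen_lt (EuclideanSpace.proj (2 : Fin 3)).continuous continuous_const
    apply continuousAt_id.congr
    filter_upwards [hopen.mem_nhds hneg] with p hp
    exact (hmap_of_cH0 (cH_of_T0 hk (Tp_eq_zero (le_of_lt hp)))).symm
  · -- zero time: squeeze
    have hT0 : Tp p₀ = 0 := Tp_eq_zero hzero.le
    have hfix : hmap k p₀ = p₀ := hmap_of_cH0 (cH_of_T0 hk hT0)
    have h1 : Filter.Tendsto (fun p => hmap k p - p) (nhds p₀) (nhds 0) := by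
      apply squeeze_zero_norm (hmap_sub_le k)
      have := (continuous_Bb k).continuousAt (x := p₀)
      rwa [ContinuousAt, Bb_zero hk hT0] at this
    have h2 : Filter.Tendsto (fun p : E3 => (hmap k p - p) + p) (nhds p₀) (nhds p₀) := by
      have := h1.add (continuousAt_id (x := p₀))
      simpa using this
    have : (fun p : E3 => (hmap k p - p) + p) = hmap k := by
      funext p; simp
    rw [ContinuousAt, hfix]
    rwa [this] at h2
  · -- positive time
    rcases eq_or_lt_of_le (r2_nonneg p₀) with hr | hr
    · -- on the axis: locally the identity
      set m := min (29 / 20 * (p₀ 2 / 2)) (9 / 10 * Real.sqrt (Real.sqrt ((p₀ 2 / 2) ^ k)))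
        with hm
      have hmpos : 0 < m := by
        apply lt_min (by linarith)
        have : 0 < Real.sqrt (Real.sqrt ((p₀ 2 / 2) ^ k)) :=
          Real.sqrt_pos.2 (Real.sqrt_pos.2 (pow_pos (by linarith) k))
        linarith
      have hopen : IsOpen {p : E3 | p₀ 2 / 2 < p 2 ∧ r2 p < m ^ 2} := by
        apply IsOpen.inter
        · exact isOpen_lt continuous_const (EuclideanSpace.proj (2 : Fin 3)).continuous
        · exact isOpen_lt continuous_r2 continuous_const
      have hmem : p₀ ∈ {p : E3 | p₀ 2 / 2 < p 2 ∧ r2 p < m ^ 2} :=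
        ⟨by linarith, by rw [← hr]; positivity⟩
      apply continuousAt_id.congr
      filter_upwards [hopen.mem_nhds hmem] with p hp
      obtain ⟨hle, hTpos⟩ := axis_nbhd hk hpos hp.1 (by rw [← hm]; exact hp.2)
      exact (hmap_of_cH0 (cH_of_le hk hTpos hle)).symm
    · exact continuousAt_interior_h hk hpos hr

lemma continuous_gmap {k : ℕ} (hk : 1 ≤ k) : Continuous (gmap k) := by
  rw [continuous_iff_continuousAt]
  intro p₀
  rcases lt_trichotomy (p₀ 2) 0 with hneg | hzero | hpos
  · have hopen : IsOpen {p : E3 | p 2 < 0} :=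
      isOpen_lt (EuclideanSpace.proj (2 : Fin 3)).continuous continuous_const
    apply continuousAt_id.congr
    filter_upwards [hopen.mem_nhds hneg] with p hp
    exact (gmap_of_cG0 (cG_of_T0 hk (Tp_eq_zero (le_of_lt hp)))).symm
  · have hT0 : Tp p₀ = 0 := Tp_eq_zero hzero.le
    have hfix : gmap k p₀ = p₀ := gmap_of_cG0 (cG_of_T0 hk hT0)
    have h1 : Filter.Tendsto (fun p => gmap k p - p) (nhds p₀) (nhds 0) := by
      apply squeeze_zero_norm (gmap_sub_le k)
      have := (continuous_Bb k).continuousAt (x := p₀)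
      rwa [ContinuousAt, Bb_zero hk hT0] at this
    have h2 : Filter.Tendsto (fun p : E3 => (gmap k p - p) + p) (nhds p₀) (nhds p₀) := by
      have := h1.add (continuousAt_id (x := p₀))
      simpa using this
    have : (fun p : E3 => (gmap k p - p) + p) = gmap k := by
      funext p; simp
    rw [ContinuousAt, hfix]
    rwa [this] at h2
  · rcases eq_or_lt_of_le (r2_nonneg p₀) with hr | hr
    · set m := min (29 / 20 * (p₀ 2 / 2)) (9 / 10 * Real.sqrt (Real.sqrt ((p₀ 2 / 2) ^ k)))
        with hm
      have hmpos : 0 < m := by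
        apply lt_min (by linarith)
        have : 0 < Real.sqrt (Real.sqrt ((p₀ 2 / 2) ^ k)) :=
          Real.sqrt_pos.2 (Real.sqrt_pos.2 (pow_pos (by linarith) k))
        linarith
      have hopen : IsOpen {p : E3 | p₀ 2 / 2 < p 2 ∧ r2 p < m ^ 2} := by
        apply IsOpen.inter
        · exact isOpen_lt continuous_const (EuclideanSpace.proj (2 : Fin 3)).continuous
        · exact isOpen_lt continuous_r2 continuous_const
      have hmem : p₀ ∈ {p : E3 | p₀ 2 / 2 < p 2 ∧ r2 p < m ^ 2} :=
        ⟨by linarith, by rw [← hr]; positivity⟩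
      apply continuousAt_id.congr
      filter_upwards [hopen.mem_nhds hmem] with p hp
      obtain ⟨hle, hTpos⟩ := axis_nbhd hk hpos hp.1 (by rw [← hm]; exact hp.2)
      exact (gmap_of_cG0 (cG_of_le hk hTpos hle)).symm
    · exact continuousAt_interior_g hk hpos hr

set_option maxHeartbeats 1000000 in
lemma circle_bounds {x y t : ℝ} (ht : 0 < t)
    (hc : (x - t) ^ 2 + (y - t / 2) ^ 2 - t ^ 2 / 16 = 0 ∨
          (x - t) ^ 2 + (y + t / 2) ^ 2 - t ^ 2 / 16 = 0) :
    3 / 4 * t ≤ x ∧ x ^ 2 + y ^ 2 ≤ 9 / 5 * t * x ∧ x ^ 2 + y ^ 2 ≤ 33 / 16 * t ^ 2 := by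
  have hxub : x ≤ 5 / 4 * t := by
    rcases hc with h | h
    · nlinarith [sq_nonneg (y - t / 2), sq_nonneg (x - t - t / 4), sq_nonneg (x - t + t / 4)]
    · nlinarith [sq_nonneg (y + t / 2), sq_nonneg (x - t - t / 4), sq_nonneg (x - t + t / 4)]
  have hxlb : 3 / 4 * t ≤ x := by
    rcases hc with h | h
    · nlinarith [sq_nonneg (y - t / 2), sq_nonneg (x - t - t / 4), sq_nonneg (x - t + t / 4)]
    · nlinarith [sq_nonneg (y + t / 2), sq_nonneg (x - t - t / 4), sq_nonneg (x - t + t / 4)]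
  refine ⟨hxlb, ?_, ?_⟩
  · rcases hc with h | h
    · have hy : y ≤ 3 / 4 * t := by
        nlinarith [sq_nonneg (x - t), sq_nonneg (y - t / 2 - t / 4), sq_nonneg (y - t / 2 + t / 4)]
      nlinarith [mul_le_mul_of_nonneg_left hy ht.le, mul_le_mul_of_nonneg_left hxub ht.le]
    · have hy : -y ≤ 3 / 4 * t := by
        nlinarith [sq_nonneg (x - t), sq_nonneg (y + t / 2 - t / 4), sq_nonneg (y + t / 2 + t / 4)]
      nlinarith [mul_le_mul_of_nonneg_left hy ht.le, mul_le_mul_of_nonneg_left hxub ht.le]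
  · rcases hc with h | h
    · have hy : y ≤ 3 / 4 * t := by
        nlinarith [sq_nonneg (x - t), sq_nonneg (y - t / 2 - t / 4), sq_nonneg (y - t / 2 + t / 4)]
      nlinarith [mul_le_mul_of_nonneg_left hy ht.le, mul_le_mul_of_nonneg_left hxub ht.le]
    · have hy : -y ≤ 3 / 4 * t := by
        nlinarith [sq_nonneg (x - t), sq_nonneg (y + t / 2 - t / 4), sq_nonneg (y + t / 2 + t / 4)]
      nlinarith [mul_le_mul_of_nonneg_left hy ht.le, mul_le_mul_of_nonneg_left hxub ht.le]

/-- any point of either small circle lies in the identity region `rr ≤ aa` -/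
lemma small_circle_le {k : ℕ} (hk : 1 ≤ k) {p : E3} (hT : 0 < p 2)
    (hc : (p 0 - p 2) ^ 2 + (p 1 - p 2 / 2) ^ 2 - p 2 ^ 2 / 16 = 0 ∨
          (p 0 - p 2) ^ 2 + (p 1 + p 2 / 2) ^ 2 - p 2 ^ 2 / 16 = 0) :
    rr p ≤ aa k p := by
  obtain ⟨x, y, t, hx, hy, ht2⟩ : ∃ x y t : ℝ, p 0 = x ∧ p 1 = y ∧ p 2 = t :=
    ⟨_, _, _, rfl, rfl, rfl⟩
  rw [hx, hy, ht2] at hc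
  rw [ht2] at hT
  obtain ⟨hxlb, hkey, hub⟩ := circle_bounds hT hc
  have hTp : Tp p = t := by rw [Tp_eq (by rw [ht2]; exact hT.le), ht2]
  have hr2 : r2 p = x ^ 2 + y ^ 2 := by unfold r2; rw [hx, hy]
  have hw : wp p = x ^ 2 / (x ^ 2 + y ^ 2) := by unfold wp r2; rw [hx, hy]
  have hr2pos : 0 < r2 p := by rw [hr2]; nlinarith [sq_nonneg y, mul_pos hT hT]
  have hr2pos' : 0 < x ^ 2 + y ^ 2 := by rwa [hr2] at hr2pos
  refine le_min ?_ ?_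
  · have h1 : r2 p ≤ (29 / 20 * t) ^ 2 := by rw [hr2]; nlinarith
    have h2 := Real.sqrt_le_sqrt h1
    rw [Real.sqrt_sq (by linarith : (0:ℝ) ≤ 29 / 20 * t)] at h2
    rw [hTp]
    exact h2
  · have hrho2 : 4 * t ^ 2 * wp p ≤ rho k p ^ 2 := by
      rw [rho_sq, hTp]
      have := Sp_ge k p
      rw [hTp] at this
      linarith
    have e3 : x ^ 2 + y ^ 2 ≤ 81 / 100 * (4 * t ^ 2 * (x ^ 2 / (x ^ 2 + y ^ 2))) := by
      have e4 : 81 / 100 * (4 * t ^ 2 * (x ^ 2 / (x ^ 2 + y ^ 2)))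
          = 81 / 25 * t ^ 2 * x ^ 2 / (x ^ 2 + y ^ 2) := by ring
      rw [e4, le_div_iff₀ hr2pos']
      nlinarith [hkey, mul_pos hT hT, sq_nonneg (x * t)]
    have h2 : r2 p ≤ (9 / 10 * rho k p) ^ 2 := by
      have e5 : (9 / 10 * rho k p) ^ 2 = 81 / 100 * rho k p ^ 2 := by ring
      rw [hr2, e5]
      have := mul_le_mul_of_nonneg_left hrho2 (by norm_num : (0:ℝ) ≤ 81 / 100)
      rw [hw] at this
      linarith
    have h3 := Real.sqrt_le_sqrt h2
    rwa [Real.sqrt_sq (by linarith [rho_nonneg k p] : (0:ℝ) ≤ 9 / 10 * rho k p)] at h3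

/-- on the peanut curve, `rr = rho` -/
lemma peanut_rr {k : ℕ} (hk : 1 ≤ k) {p : E3} (hT : 0 < p 2)
    (he : (p 0 ^ 2 - 2 * p 0 * p 2 + p 1 ^ 2) * (p 0 ^ 2 + 2 * p 0 * p 2 + p 1 ^ 2)
      - p 2 ^ k = 0) : rr p = rho k p ∧ 0 < rr p := by
  obtain ⟨x, y, t, hx, hy, ht2⟩ : ∃ x y t : ℝ, p 0 = x ∧ p 1 = y ∧ p 2 = t :=
    ⟨_, _, _, rfl, rfl, rfl⟩
  rw [hx, hy, ht2] at he
  rw [ht2] at hT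
  have hTp : Tp p = t := by rw [Tp_eq (by rw [ht2]; exact hT.le), ht2]
  have hr2 : r2 p = x ^ 2 + y ^ 2 := by unfold r2; rw [hx, hy]
  have hw : wp p = x ^ 2 / (x ^ 2 + y ^ 2) := by unfold wp r2; rw [hx, hy]
  have htk : 0 < t ^ k := pow_pos hT k
  have he' : (x ^ 2 + y ^ 2) ^ 2 - 4 * x ^ 2 * t ^ 2 = t ^ k := by linear_combination he
  have hr2pos' : 0 < x ^ 2 + y ^ 2 := by
    rcases lt_or_ge 0 (x ^ 2 + y ^ 2) with h | h
    · exact h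
    · exfalso
      have hx0 : x ^ 2 = 0 := by nlinarith [sq_nonneg x, sq_nonneg y]
      have hy0 : y ^ 2 = 0 := by nlinarith [sq_nonneg x, sq_nonneg y]
      rw [hx0, hy0] at he'
      simp at he'
      linarith
  have hr2pos : 0 < r2 p := by rwa [hr2]
  have harg : 4 * Tp p ^ 4 * wp p ^ 2 + Tp p ^ k = (r2 p - 2 * t ^ 2 * wp p) ^ 2 := by
    rw [hTp, hw, hr2]
    have hne : x ^ 2 + y ^ 2 ≠ 0 := ne_of_gt hr2pos'
    field_simp
    nlinarith [he']
  have hge : 0 ≤ r2 p - 2 * t ^ 2 * wp p := by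
    rw [hr2, hw, sub_nonneg]
    have e4 : 2 * t ^ 2 * (x ^ 2 / (x ^ 2 + y ^ 2)) = 2 * t ^ 2 * x ^ 2 / (x ^ 2 + y ^ 2) := by
      ring
    rw [e4, div_le_iff₀ hr2pos']
    nlinarith [sq_nonneg (x * t)]
  have hSp : Sp k p = r2 p - 2 * t ^ 2 * wp p := by
    unfold Sp; rw [harg]; exact Real.sqrt_sq hge
  have hrho : rho k p = rr p := by
    unfold rho rr
    rw [hTp, hSp]
    congr 1
    ring
  exact ⟨hrho.symm, Real.sqrt_pos.2 hr2pos⟩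
/-- algebraic identity: image of a peanut point lies on the cone circle -/
lemma pull_circle {x y t r c : ℝ} (hr2 : r ^ 2 = x ^ 2 + y ^ 2) (hc : c * r = 2 * t) :
    (x * c) ^ 2 + (y * c) ^ 2 - 4 * t ^ 2 = 0 := by
  linear_combination (-(c ^ 2)) * hr2 + (c * r + 2 * t) * hc

/-- algebraic identity: preimage of a cone-circle point lies on the peanut -/
lemma pull_peanut {x y t A S w c tk : ℝ}
    (h1 : x ^ 2 + y ^ 2 = 4 * t ^ 2) (hw : x ^ 2 = 4 * t ^ 2 * w)
    (e1 : A ^ 2 = 2 * t ^ 2 * w + S) (e2 : S ^ 2 = 4 * t ^ 4 * w ^ 2 + tk)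
    (hc : 2 * t * c = A) :
    ((x * c) ^ 2 - 2 * (x * c) * t + (y * c) ^ 2) *
      ((x * c) ^ 2 + 2 * (x * c) * t + (y * c) ^ 2) - tk = 0 := by
  have k1 : (x * c) ^ 2 + (y * c) ^ 2 = A ^ 2 := by
    linear_combination c ^ 2 * h1 + (2 * t * c + A) * hc
  have k2 : (x * c) ^ 2 = w * A ^ 2 := by
    linear_combination c ^ 2 * hw + w * (2 * t * c + A) * hc
  have k3 : A ^ 4 - 4 * (w * A ^ 2) * t ^ 2 - tk = 0 := by
    linear_combination (A ^ 2 + S - 2 * t ^ 2 * w) * e1 + e2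
  linear_combination ((x * c) ^ 2 + (y * c) ^ 2 + A ^ 2) * k1 + (-(4 * t ^ 2)) * k2 + k3

lemma X1_zero {k : ℕ} (hk : 1 ≤ k) {p : E3} (ht : p 2 = 0)
    (he : ((p 0 ^ 2 - 2 * p 0 * p 2 + p 1 ^ 2) * (p 0 ^ 2 + 2 * p 0 * p 2 + p 1 ^ 2)
        - p 2 ^ k) * ((p 0 - p 2) ^ 2 + (p 1 - p 2 / 2) ^ 2 - p 2 ^ 2 / 16) *
        ((p 0 - p 2) ^ 2 + (p 1 + p 2 / 2) ^ 2 - p 2 ^ 2 / 16) = 0) :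
    p 0 = 0 ∧ p 1 = 0 := by
  rw [ht, zero_pow (by omega : k ≠ 0)] at he
  have h4 : (p 0 ^ 2 + p 1 ^ 2) ^ 4 = 0 := by linear_combination he
  have hs : p 0 ^ 2 + p 1 ^ 2 = 0 := by
    exact pow_eq_zero_iff (by norm_num : (4:ℕ) ≠ 0) |>.1 h4
  constructor
  · exact pow_eq_zero_iff (two_ne_zero) |>.1 (by nlinarith [sq_nonneg (p 0), sq_nonneg (p 1)])
  · exact pow_eq_zero_iff (two_ne_zero) |>.1 (by nlinarith [sq_nonneg (p 0), sq_nonneg (p 1)])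

lemma cone_zero {p : E3} (ht : p 2 = 0)
    (he : (p 0 ^ 2 + p 1 ^ 2 - 4 * p 2 ^ 2) *
        ((p 0 - p 2) ^ 2 + (p 1 - p 2 / 2) ^ 2 - p 2 ^ 2 / 16) *
        ((p 0 - p 2) ^ 2 + (p 1 + p 2 / 2) ^ 2 - p 2 ^ 2 / 16) = 0) :
    p 0 = 0 ∧ p 1 = 0 := by
  rw [ht] at he
  have h3 : (p 0 ^ 2 + p 1 ^ 2) ^ 3 = 0 := by linear_combination he
  have hs : p 0 ^ 2 + p 1 ^ 2 = 0 := by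
    exact pow_eq_zero_iff (by norm_num : (3:ℕ) ≠ 0) |>.1 h3
  constructor
  · exact pow_eq_zero_iff (two_ne_zero) |>.1 (by nlinarith [sq_nonneg (p 0), sq_nonneg (p 1)])
  · exact pow_eq_zero_iff (two_ne_zero) |>.1 (by nlinarith [sq_nonneg (p 0), sq_nonneg (p 1)])

lemma hmap_id_of_t0 {k : ℕ} (hk : 1 ≤ k) {p : E3} (ht : p 2 = 0) : hmap k p = p :=
  hmap_of_cH0 (cH_of_T0 hk (Tp_eq_zero (le_of_eq ht)))

/-- coordinates of the image of a peanut point -/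
lemma hmap_peanut {k : ℕ} (hk : 1 ≤ k) {p : E3} (hT : 0 < p 2)
    (hrr : rr p = rho k p) (hrpos : 0 < rr p) {i : Fin 3} (hi : i ≠ 2) :
    hmap k p i = p i * (2 * p 2 / rr p) := by
  have hTpos : 0 < Tp p := by rw [Tp_eq hT.le]; exact hT
  have hsum : rr p + cH k p = 2 * Tp p := by
    rw [rr_add_cH]
    conv_lhs => rw [hrr]
    rw [show phi (aa k p) (rho k p) (2 * Tp p) (rho k p)
        = 2 * Tp p from phi_self _ _ _ (aa_lt_rho hk hTpos)]
  rw [hmap_scale hk hTpos hrpos hi, hsum, Tp_eq hT.le]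

/-- coordinates of the preimage of a circle point -/
lemma gmap_circle {k : ℕ} (hk : 1 ≤ k) {p : E3} (hT : 0 < p 2)
    (hrr : rr p = 2 * p 2) {i : Fin 3} (hi : i ≠ 2) :
    gmap k p i = p i * (rho k p / rr p) := by
  have hTpos : 0 < Tp p := by rw [Tp_eq hT.le]; exact hT
  have hrpos : 0 < rr p := by rw [hrr]; linarith
  have hsum : rr p + cG k p = rho k p := by
    rw [rr_add_cG]
    conv_lhs => rw [hrr, show (2 : ℝ) * p 2 = 2 * Tp p by rw [Tp_eq hT.le]]
    rw [show phi (aa k p) (2 * Tp p) (rho k p) (2 * Tp p)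
        = rho k p from phi_self _ _ _ (aa_lt_2T hk hTpos)]
  rw [gmap_scale hk hTpos hrpos hi, hsum]

lemma r2_eq (p : E3) : r2 p = p 0 ^ 2 + p 1 ^ 2 := rfl

/-- the image identity -/
lemma image_X1 {k : ℕ} (hk : 1 ≤ k) : hmap k '' (ExampleX1 k) = ConeC := by
  ext q
  constructor
  · rintro ⟨p, hp, rfl⟩
    obtain ⟨he, ht⟩ := hp
    rcases eq_or_lt_of_le ht with ht0 | htpos
    · obtain ⟨h0, h1⟩ := X1_zero hk ht0.symm he
      rw [hmap_id_of_t0 hk ht0.symm]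
      refine ⟨?_, ht⟩
      rw [h0, h1, ← ht0]
      ring
    · rcases mul_eq_zero.1 he with h12 | h3
      · rcases mul_eq_zero.1 h12 with h1 | h2
        · -- peanut point
          obtain ⟨hrr, hrpos⟩ := peanut_rr hk htpos h1
          have hc : (2 * p 2 / rr p) * rr p = 2 * p 2 := by
            field_simp
          have hF1 : (hmap k p 0) ^ 2 + (hmap k p 1) ^ 2 - 4 * (hmap k p 2) ^ 2 = 0 := by
            rw [hmap_apply2, hmap_peanut hk htpos hrr hrpos (i := 0) (by decide),
              hmap_peanut hk htpos hrr hrpos (i := 1) (by decide)]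
            exact pull_circle (by rw [rr_sq, r2_eq]) hc
          refine ⟨?_, by rw [hmap_apply2]; exact ht⟩
          exact mul_eq_zero.2 (Or.inl (mul_eq_zero.2 (Or.inl hF1)))
        · -- first small circle: fixed
          have hle := small_circle_le hk htpos (Or.inl h2)
          rw [hmap_of_cH0 (cH_of_le hk (by rw [Tp_eq ht]; exact htpos) hle)]
          exact ⟨mul_eq_zero.2 (Or.inl (mul_eq_zero.2 (Or.inr h2))), ht⟩
      · -- second small circle: fixed
        have hle := small_circle_le hk htpos (Or.inr h3)
        rw [hmap_of_cH0 (cH_of_le hk (by rw [Tp_eq ht]; exact htpos) hle)]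
        exact ⟨mul_eq_zero.2 (Or.inr h3), ht⟩
  · rintro ⟨he, ht⟩
    rcases eq_or_lt_of_le ht with ht0 | htpos
    · obtain ⟨h0, h1⟩ := cone_zero ht0.symm he
      refine ⟨q, ⟨?_, ht⟩, hmap_id_of_t0 hk ht0.symm⟩
      rw [h0, h1, ← ht0, zero_pow (by omega : k ≠ 0)]
      ring
    · rcases mul_eq_zero.1 he with h12 | h3
      · rcases mul_eq_zero.1 h12 with h1 | h2
        · -- big circle: pull back to the peanut
          have hr2q : r2 q = (2 * q 2) ^ 2 := by rw [r2_eq]; nlinarith [h1]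
          have hrr : rr q = 2 * q 2 := by
            rw [rr, hr2q, Real.sqrt_sq (by linarith : (0:ℝ) ≤ 2 * q 2)]
          have hTq : Tp q = q 2 := Tp_eq ht
          refine ⟨gmap k q, ⟨?_, by rw [gmap_apply2]; exact ht⟩, hmap_gmap hk q⟩
          have hF1 : (gmap k q 0 ^ 2 - 2 * gmap k q 0 * gmap k q 2 + gmap k q 1 ^ 2) *
              (gmap k q 0 ^ 2 + 2 * gmap k q 0 * gmap k q 2 + gmap k q 1 ^ 2)
              - gmap k q 2 ^ k = 0 := by
            rw [gmap_apply2, gmap_circle hk htpos hrr (i := 0) (by decide),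
              gmap_circle hk htpos hrr (i := 1) (by decide), hrr]
            have hw : q 0 ^ 2 = 4 * q 2 ^ 2 * wp q := by
              rw [wp, hr2q]
              field_simp
              ring
            have e1 : rho k q ^ 2 = 2 * q 2 ^ 2 * wp q + Sp k q := by
              rw [rho_sq, hTq]
            have e2 : Sp k q ^ 2 = 4 * q 2 ^ 4 * wp q ^ 2 + q 2 ^ k := by
              rw [Sp_sq, hTq]
            have hcc : 2 * q 2 * (rho k q / (2 * q 2)) = rho k q := by
              field_simp
            exact pull_peanut (by nlinarith [h1]) hw e1 e2 hcc
          exact mul_eq_zero.2 (Or.inl (mul_eq_zero.2 (Or.inl hF1)))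
        · have hle := small_circle_le hk htpos (Or.inl h2)
          have hfix : hmap k q = q :=
            hmap_of_cH0 (cH_of_le hk (by rw [Tp_eq ht]; exact htpos) hle)
          exact ⟨q, ⟨mul_eq_zero.2 (Or.inl (mul_eq_zero.2 (Or.inr h2))), ht⟩, hfix⟩
      · have hle := small_circle_le hk htpos (Or.inr h3)
        have hfix : hmap k q = q :=
          hmap_of_cH0 (cH_of_le hk (by rw [Tp_eq ht]; exact htpos) hle)
        exact ⟨q, ⟨mul_eq_zero.2 (Or.inr h3), ht⟩, hfix⟩

lemma hmap_zero {k : ℕ} (hk : 1 ≤ k) : hmap k 0 = 0 :=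
  hmap_id_of_t0 hk rfl

end X1C

/-- the germ at `0` of `X₁` is ambient topologically equivalent to the germ
at `0` of the straight cone `C` over three disjoint circles. -/
theorem example1_X1_top_equiv_cone (k : ℕ) (hk : 4 < k) :
    AmbientTopEquiv (ExampleX1 k) ConeC := by
  have hk1 : 1 ≤ k := by omega
  refine ⟨Set.univ, Set.univ, isOpen_univ, isOpen_univ, Set.mem_univ 0, Set.mem_univ 0,
    X1C.hmap k, X1C.gmap k, (X1C.continuous_hmap hk1).continuousOn,
    (X1C.continuous_gmap hk1).continuousOn, Set.mapsTo_univ _ _, Set.mapsTo_univ _ _,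
    fun x _ => X1C.gmap_hmap hk1 x, fun y _ => X1C.hmap_gmap hk1 y,
    X1C.hmap_zero hk1, ?_⟩
  rw [Set.inter_univ, Set.inter_univ]
  exact X1C.image_X1 hk1
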